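/- Let p, q be unit quaternions, α, γ imaginary quaternions, and Λ ∈ ℝ with sin Λ ≠ 0. Put X = (pα, ½(1 − √3 cot Λ) qα) and Y = (pγ, ½(1 + √3 cot Λ) qγ). Then G(X,Y) = (1/(2√3))(1 + cot²Λ) · (2 p(α×γ), q(α×γ)). -/

import Mathlib

noncomputable section

open Quaternion

/-- Euclidean inner product on the quaternions: `⟨x,y⟩ = Re (x * star y)`. -/
def ipQ (x y : ℍ[ℝ]) : ℝ := (x * star y).re

/-- Euclidean inner product on pairs of quaternions. -/
def ip2Q (Z W : ℍ[ℝ] × ℍ[ℝ]) : ℝ := ipQ Z.1 W.1 + ipQ Z.2 W.2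

/-- The almost complex structure `J` of the nearly Kähler `S³ × S³` at `(p,q)`:
`J(U,V) = (1/√3)(2pq⁻¹V − U, −2qp⁻¹U + V)`. -/
def Jmap (p q : ℍ[ℝ]) (Z : ℍ[ℝ] × ℍ[ℝ]) : ℍ[ℝ] × ℍ[ℝ] :=
  ((Real.sqrt 3)⁻¹ • ((2 : ℝ) • (p * q⁻¹ * Z.2) - Z.1),
   (Real.sqrt 3)⁻¹ • (-((2 : ℝ) • (q * p⁻¹ * Z.1)) + Z.2))

/-- The nearly Kähler metric `g(Z,Z') = ½(⟨Z,Z'⟩ + ⟨JZ,JZ'⟩)`. -/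
def gmet (p q : ℍ[ℝ]) (Z W : ℍ[ℝ] × ℍ[ℝ]) : ℝ :=
  (1 / 2) * (ip2Q Z W + ip2Q (Jmap p q Z) (Jmap p q W))

/-- The almost product structure `P(U,V) = (pq⁻¹V, qp⁻¹U)`. -/
def Pmap (p q : ℍ[ℝ]) (Z : ℍ[ℝ] × ℍ[ℝ]) : ℍ[ℝ] × ℍ[ℝ] :=
  (p * q⁻¹ * Z.2, q * p⁻¹ * Z.1)

/-- The usual product structure `Q(U,V) = (−U, V)`. -/
def Qmap (Z : ℍ[ℝ] × ℍ[ℝ]) : ℍ[ℝ] × ℍ[ℝ] := (-Z.1, Z.2)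

/-- Cross product of (imaginary) quaternions: `α × β = ½(αβ − βα)`. -/
def crossQ (a b : ℍ[ℝ]) : ℍ[ℝ] := (1 / 2 : ℝ) • (a * b - b * a)

/-- The tensor `G = ∇̃J` at `(p,q)`, evaluated on tangent vectors `X = (pα, qβ)`,
`Y = (pγ, qδ)` (so `α = p⁻¹X₁`, etc.):
`G(X,Y) = (2/(3√3))(p(β×γ + α×δ + α×γ − 2β×δ), q(−α×δ − β×γ + 2α×γ − β×δ))`. -/
def Gmap (p q : ℍ[ℝ]) (X Y : ℍ[ℝ] × ℍ[ℝ]) : ℍ[ℝ] × ℍ[ℝ] :=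
  (2 / (3 * Real.sqrt 3) : ℝ) •
    ((p * (crossQ (q⁻¹ * X.2) (p⁻¹ * Y.1) + crossQ (p⁻¹ * X.1) (q⁻¹ * Y.2)
        + crossQ (p⁻¹ * X.1) (p⁻¹ * Y.1) - (2 : ℝ) • crossQ (q⁻¹ * X.2) (q⁻¹ * Y.2)),
      q * (-(crossQ (p⁻¹ * X.1) (q⁻¹ * Y.2)) - crossQ (q⁻¹ * X.2) (p⁻¹ * Y.1)
        + (2 : ℝ) • crossQ (p⁻¹ * X.1) (p⁻¹ * Y.1) - crossQ (q⁻¹ * X.2) (q⁻¹ * Y.2))))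

/-- evaluation of `G` on the special tangent vectors
`X = (pα, ½(1 − √3 cot Λ)qα)` and `Y = (pγ, ½(1 + √3 cot Λ)qγ)`. -/

lemma crossQ_smul_left (r : ℝ) (a b : ℍ[ℝ]) : crossQ (r • a) b = r • crossQ a b := by
  simp [crossQ, smul_sub, smul_mul_assoc, mul_smul_comm, smul_smul, mul_comm]

lemma crossQ_smul_right (r : ℝ) (a b : ℍ[ℝ]) : crossQ a (r • b) = r • crossQ a b := by
  simp [crossQ, smul_sub, smul_mul_assoc, mul_smul_comm, smul_smul, mul_comm]

theorem stmt9 (p q : ℍ[ℝ]) (hp : ‖p‖ = 1) (hq : ‖q‖ = 1)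
    (α γ : ℍ[ℝ]) (hα : α.re = 0) (hγ : γ.re = 0)
    (Λ : ℝ) (hΛ : Real.sin Λ ≠ 0)
    (X Y : ℍ[ℝ] × ℍ[ℝ])
    (hX : X = (p * α, ((1 - Real.sqrt 3 * (Real.cos Λ / Real.sin Λ)) / 2 : ℝ) • (q * α)))
    (hY : Y = (p * γ, ((1 + Real.sqrt 3 * (Real.cos Λ / Real.sin Λ)) / 2 : ℝ) • (q * γ))) :
    Gmap p q X Y =
      ((1 + (Real.cos Λ / Real.sin Λ) ^ 2) / (2 * Real.sqrt 3) : ℝ) •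
        (((2 : ℝ) • (p * crossQ α γ), q * crossQ α γ) : ℍ[ℝ] × ℍ[ℝ]) := by

  have hp0 : p ≠ 0 := by intro h; rw [h] at hp; simp at hp
  have hq0 : q ≠ 0 := by intro h; rw [h] at hq; simp at hq
  set c : ℝ := Real.cos Λ / Real.sin Λ with hc
  set a : ℝ := (1 - Real.sqrt 3 * c) / 2 with ha
  set b : ℝ := (1 + Real.sqrt 3 * c) / 2 with hb
  have h3 : Real.sqrt 3 * Real.sqrt 3 = 3 := Real.mul_self_sqrt (by norm_num)
  have h3ne : Real.sqrt 3 ≠ 0 := by positivity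
  subst hX hY
  simp only [Gmap, mul_smul_comm, inv_mul_cancel_left₀ hp0, inv_mul_cancel_left₀ hq0,
    crossQ_smul_left, crossQ_smul_right, smul_smul]
  set Z := crossQ α γ with hZ
  rw [show a • Z + b • Z + Z - ((2 * (b * a)) : ℝ) • Z
      = ((a + b + 1 - 2 * (a * b)) : ℝ) • Z from by module,
    show -(b • Z) - a • Z + (2:ℝ) • Z - ((b * a) : ℝ) • Z
      = ((2 - a - b - a * b) : ℝ) • Z from by module]
  have hk1 : (2 / (3 * Real.sqrt 3) : ℝ) * (a + b + 1 - 2 * (a * b))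
      = (1 + c ^ 2) / (2 * Real.sqrt 3) * 2 := by
    have hab : a * b = (1 - 3 * c ^ 2) / 4 := by rw [ha, hb]; linear_combination (-c ^ 2 / 4) * h3
    have hs : a + b = 1 := by rw [ha, hb]; ring
    rw [show a + b + 1 - 2 * (a * b) = 3 * (1 + c ^ 2) / 2 by linear_combination hs - 2 * hab]
    ring
  have hk2 : (2 / (3 * Real.sqrt 3) : ℝ) * (2 - a - b - a * b)
      = (1 + c ^ 2) / (2 * Real.sqrt 3) := by
    have hab : a * b = (1 - 3 * c ^ 2) / 4 := by rw [ha, hb]; linear_combination (-c ^ 2 / 4) * h3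
    have hs : a + b = 1 := by rw [ha, hb]; ring
    rw [show 2 - a - b - a * b = 3 * (1 + c ^ 2) / 4 by linear_combination -hs - hab]
    ring
  refine Prod.ext ?_ ?_
  · show (2 / (3 * Real.sqrt 3) : ℝ) • (p * ((a + b + 1 - 2 * (a * b)) : ℝ) • Z)
      = ((1 + c ^ 2) / (2 * Real.sqrt 3) : ℝ) • ((2:ℝ) • (p * Z))
    rw [mul_smul_comm, smul_smul, hk1, smul_smul]
  · show (2 / (3 * Real.sqrt 3) : ℝ) • (q * ((2 - a - b - a * b) : ℝ) • Z)
      = ((1 + c ^ 2) / (2 * Real.sqrt 3) : ℝ) • (q * Z)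
    rw [mul_smul_comm, smul_smul, hk2]
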